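/- Fix e > 1. If ν is a ribbon with cont(ν) = mδ for some m ≥ 1 (δ = α_0 + ... + α_{e-1}), then ν has an SE-removable ribbon of content δ. -/

import Mathlib

open Finset

abbrev Node : Type := ℤ × ℤ

/-- `v` is weakly southeast of `u` (product order). -/
def SE (u v : Node) : Prop := u.1 ≤ v.1 ∧ u.2 ≤ v.2

/-- `v` is weakly northeast of `u` (`u ↗ v`). -/
def NEr (u v : Node) : Prop := v.1 ≤ u.1 ∧ u.2 ≤ v.2

/-- `v` is strictly northeast of `u` (`u ⇗ v`). -/
def SNE (u v : Node) : Prop := v.1 < u.1 ∧ u.2 < v.2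

def IsSkew (τ : Finset Node) : Prop :=
  ∀ u ∈ τ, ∀ w ∈ τ, ∀ v : Node, SE u v → SE v w → v ∈ τ

def Adj (u v : Node) : Prop :=
  v = u + (1, 0) ∨ v = u + (-1, 0) ∨ v = u + (0, 1) ∨ v = u + (0, -1)

def PathIn (τ : Finset Node) (u v : Node) : Prop :=
  Relation.ReflTransGen (fun a b => a ∈ τ ∧ b ∈ τ ∧ Adj a b) u v

def IsConnectedShape (τ : Finset Node) : Prop :=
  ∀ u ∈ τ, ∀ v ∈ τ, PathIn τ u v

def Cornered (τ : Finset Node) : Prop :=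
  (∀ u ∈ τ, ∀ u' ∈ τ, (u + (1, 0) ∉ τ ∧ u + (0, -1) ∉ τ) →
      (u' + (1, 0) ∉ τ ∧ u' + (0, -1) ∉ τ) → u = u') ∧
  (∀ v ∈ τ, ∀ v' ∈ τ, (v + (-1, 0) ∉ τ ∧ v + (0, 1) ∉ τ) →
      (v' + (-1, 0) ∉ τ ∧ v' + (0, 1) ∉ τ) → v = v')

def DiagConvex (τ : Finset Node) : Prop :=
  ∀ u ∈ τ, ∀ w ∈ τ, ∀ v : Node,
    u.2 - u.1 = v.2 - v.1 → v.2 - v.1 = w.2 - w.1 → SE u v → SE v w → v ∈ τ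

def Thin (τ : Finset Node) : Prop :=
  ∀ u ∈ τ, ∀ v ∈ τ, u.2 - u.1 = v.2 - v.1 → u = v

def IsRibbon (ξ : Finset Node) : Prop :=
  ξ.Nonempty ∧ IsSkew ξ ∧ IsConnectedShape ξ ∧ Thin ξ

def MaxSW (τ : Finset Node) (u : Node) : Prop :=
  u ∈ τ ∧ ∀ v ∈ τ, NEr v u → v = u

def MaxNE (τ : Finset Node) (v : Node) : Prop :=
  v ∈ τ ∧ ∀ w ∈ τ, NEr v w → w = v

def IsNEPath (z : ℕ → Node) (k : ℕ) : Prop :=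
  ∀ i, i + 1 < k → z (i + 1) = z i + (-1, 0) ∨ z (i + 1) = z i + (0, 1)

def IsSEPath (z : ℕ → Node) (k : ℕ) : Prop :=
  ∀ i, i + 1 < k → z (i + 1) = z i + (1, 0) ∨ z (i + 1) = z i + (0, 1)

def SERemovable (τ μ : Finset Node) : Prop :=
  μ ⊆ τ ∧ ∀ u ∈ μ, ∀ v ∈ τ \ μ, ¬ SE u v

/-- Residue of a node, in `ZMod e`. -/
def res (e : ℕ) (u : Node) : ZMod e := ((u.2 - u.1 : ℤ) : ZMod e)

/-- Content of a finite set of nodes, as an element of the free module on `ZMod e`. -/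
def cont (e : ℕ) (τ : Finset Node) : ZMod e → ℤ :=
  fun i => ((τ.filter (fun u => res e u = i)).card : ℤ)

/-- `α(t,h) = α_t + α_{t+1} + ⋯ + α_{t+h-1}` (indices mod `e`). -/
def alphaR (e : ℕ) (t : ZMod e) (h : ℕ) : ZMod e → ℤ :=
  fun i => (((Finset.range h).filter (fun j : ℕ => t + ((j : ℕ) : ZMod e) = i)).card : ℤ)

def IsPosRoot (e : ℕ) (β : ZMod e → ℤ) : Prop :=
  ∃ t : ZMod e, ∃ h : ℕ, 1 ≤ h ∧ β = alphaR e t h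

/-- The null root `δ = α_0 + ⋯ + α_{e-1}`. -/
def deltaR (e : ℕ) : ZMod e → ℤ := fun _ => 1

/-- Imaginary elements: positive multiples of `δ`. -/
def IsImag (e : ℕ) (β : ZMod e → ℤ) : Prop :=
  ∃ m : ℕ, 1 ≤ m ∧ β = fun _ => (m : ℤ)

/-- Indivisible positive roots `Ψ`: real positive roots together with `δ`. -/
def IsIndiv (e : ℕ) (β : ZMod e → ℤ) : Prop :=
  (∃ t : ZMod e, ∃ h : ℕ, 1 ≤ h ∧ ¬ (e ∣ h) ∧ β = alphaR e t h) ∨ β = deltaR e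

/-- A convex preorder on the positive roots. -/
def ConvexPreorder (e : ℕ) (R : (ZMod e → ℤ) → (ZMod e → ℤ) → Prop) : Prop :=
  (∀ β, IsPosRoot e β → R β β) ∧
  (∀ β γ ν, IsPosRoot e β → IsPosRoot e γ → IsPosRoot e ν →
      R β γ → R γ ν → R β ν) ∧
  (∀ β γ, IsPosRoot e β → IsPosRoot e γ → (R β γ ∨ R γ β)) ∧
  (∀ β γ, IsPosRoot e β → IsPosRoot e γ → R β γ → IsPosRoot e (β + γ) →
      R β (β + γ) ∧ R (β + γ) γ) ∧
  (∀ β γ, IsPosRoot e β → IsPosRoot e γ →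
      ((R β γ ∧ R γ β) ↔ (β = γ ∨ (IsImag e β ∧ IsImag e γ))))

/-- `β ≻ γ`. -/
def StrictR (e : ℕ) (R : (ZMod e → ℤ) → (ZMod e → ℤ) → Prop)
    (β γ : ZMod e → ℤ) : Prop := R β γ ∧ ¬ R γ β

/-- `θ` is a sum of positive roots strictly smaller than `β`. -/
def SumRootsLt (e : ℕ) (R : (ZMod e → ℤ) → (ZMod e → ℤ) → Prop)
    (β θ : ZMod e → ℤ) : Prop :=
  ∃ k : ℕ, ∃ γ : Fin k → (ZMod e → ℤ),
    (∀ i, IsPosRoot e (γ i) ∧ StrictR e R β (γ i)) ∧ θ = ∑ i, γ i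

/-- `θ` is a sum of positive roots strictly greater than `β`. -/
def SumRootsGt (e : ℕ) (R : (ZMod e → ℤ) → (ZMod e → ℤ) → Prop)
    (β θ : ZMod e → ℤ) : Prop :=
  ∃ k : ℕ, ∃ γ : Fin k → (ZMod e → ℤ),
    (∀ i, IsPosRoot e (γ i) ∧ StrictR e R (γ i) β) ∧ θ = ∑ i, γ i

/-- A two-tile tableau `(λ1, λ2)` for `τ`. -/
def IsTableau2 (τ lam1 lam2 : Finset Node) : Prop :=
  IsSkew lam1 ∧ IsSkew lam2 ∧ Disjoint lam1 lam2 ∧ lam1 ∪ lam2 = τ ∧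
  ∀ u ∈ lam2, ∀ v ∈ lam1, ¬ SE u v

/-- A cuspidal skew shape (with respect to the preorder `R`). -/
def IsCuspidal (e : ℕ) (R : (ZMod e → ℤ) → (ZMod e → ℤ) → Prop)
    (τ : Finset Node) : Prop :=
  IsPosRoot e (cont e τ) ∧
  ∀ lam1 lam2 : Finset Node, IsTableau2 τ lam1 lam2 →
    SumRootsLt e R (cont e τ) (cont e lam1) ∧
    SumRootsGt e R (cont e τ) (cont e lam2)

/-- An SE-removable ribbon in `τ`. -/
def SERemRibbon (τ ξ : Finset Node) : Prop := IsRibbon ξ ∧ SERemovable τ ξ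

/-- A minimal SE-removable ribbon in `τ`. -/
def MinSERem (e : ℕ) (R : (ZMod e → ℤ) → (ZMod e → ℤ) → Prop)
    (τ ξ : Finset Node) : Prop :=
  SERemRibbon τ ξ ∧ ∀ ν, SERemRibbon τ ν → R (cont e ν) (cont e ξ)

namespace Stmt14Aux

def dgn (u : Node) : ℤ := u.2 - u.1

lemma adj_symm {a b : Node} (h : Adj a b) : Adj b a := by
  rcases h with h | h | h | h <;> subst h <;>
    simp [Adj, Prod.ext_iff] <;> omega

lemma adj_dgn {b c : Node} (h : Adj b c) : dgn c = dgn b + 1 ∨ dgn c = dgn b - 1 := by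
  rcases h with h | h | h | h <;> subst h <;> simp [dgn] <;> omega

lemma pathin_symm {τ : Finset Node} {u v : Node} (h : PathIn τ u v) : PathIn τ v u :=
  (@Relation.ReflTransGen.stdSymm _ _
    ⟨fun _ _ hab => ⟨hab.2.1, hab.1, adj_symm hab.2.2⟩⟩).symm _ _ h

lemma step_lemma {ν : Finset Node} (hsk : IsSkew ν) (hth : Thin ν)
    {u v : Node} (hu : u ∈ ν) (hv : v ∈ ν) (hd : dgn v = dgn u + 1) :
    v = (u.1, u.2 + 1) ∨ v = (u.1 - 1, u.2) := by
  simp only [dgn] at hd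
  rcases le_or_gt u.1 v.1 with h | h
  · left
    have hx : ((u.1, u.2 + 1) : Node) ∈ ν :=
      hsk u hu v hv (u.1, u.2 + 1) ⟨le_refl _, by omega⟩ ⟨h, by omega⟩
    have := hth v hv (u.1, u.2 + 1) hx (by simp; omega)
    exact this
  · right
    have hx : ((u.1 - 1, u.2) : Node) ∈ ν :=
      hsk v hv u hu (u.1 - 1, u.2) ⟨by omega, by omega⟩ ⟨by omega, le_refl _⟩
    exact hth v hv (u.1 - 1, u.2) hx (by simp; omega)

lemma path_interval {ν : Finset Node} {u v : Node} (h : PathIn ν u v) (hu : u ∈ ν) :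
    ∀ d, dgn u ≤ d → d ≤ dgn v → ∃ w ∈ ν, dgn w = d := by
  induction h with
  | refl => exact fun d h1 h2 => ⟨u, hu, le_antisymm h1 h2 ▸ rfl⟩
  | @tail b c _ hbc ih =>
      intro d h1 h2
      rcases le_or_gt d (dgn b) with h3 | h3
      · exact ih d h1 h3
      · rcases adj_dgn hbc.2.2 with h4 | h4
        · exact ⟨c, hbc.2.1, by omega⟩
        · exact absurd h2 (by omega)

lemma exists_enum {ν : Finset Node} (hne : ν.Nonempty) (hsk : IsSkew ν)
    (hcn : IsConnectedShape ν) (hth : Thin ν) :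
    ∃ (d0 d1 : ℤ) (n : ℤ → Node),
      d0 ≤ d1 ∧
      (∀ d, d0 ≤ d → d ≤ d1 → n d ∈ ν ∧ dgn (n d) = d) ∧
      (∀ u ∈ ν, d0 ≤ dgn u ∧ dgn u ≤ d1 ∧ u = n (dgn u)) ∧
      ν.card = (d1 + 1 - d0).toNat ∧
      (∀ d, d0 ≤ d → d < d1 →
        n (d + 1) = ((n d).1, (n d).2 + 1) ∨ n (d + 1) = ((n d).1 - 1, (n d).2)) := by
  classical
  set D : Finset ℤ := ν.image dgn with hD
  have hDne : D.Nonempty := hne.image _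
  set d0 := D.min' hDne with hd0
  set d1 := D.max' hDne with hd1
  obtain ⟨u0, hu0, hu0d⟩ := Finset.mem_image.mp (D.min'_mem hDne)
  obtain ⟨u1, hu1, hu1d⟩ := Finset.mem_image.mp (D.max'_mem hDne)
  have hint : ∀ d, d0 ≤ d → d ≤ d1 → ∃ w ∈ ν, dgn w = d := by
    intro d h1 h2
    exact path_interval (hcn u0 hu0 u1 hu1) hu0 d (by omega) (by omega)
  set n : ℤ → Node := fun d => if h : ∃ w ∈ ν, dgn w = d then h.choose else (0, 0) with hn
  have hnmem : ∀ d, d0 ≤ d → d ≤ d1 → n d ∈ ν ∧ dgn (n d) = d := by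
    intro d h1 h2
    have h := hint d h1 h2
    simp only [hn, dif_pos h]
    exact ⟨h.choose_spec.1, h.choose_spec.2⟩
  have hbounds : ∀ u ∈ ν, d0 ≤ dgn u ∧ dgn u ≤ d1 ∧ u = n (dgn u) := by
    intro u hu
    have h1 : dgn u ∈ D := Finset.mem_image_of_mem _ hu
    have h2 : d0 ≤ dgn u := D.min'_le _ h1
    have h3 : dgn u ≤ d1 := D.le_max' _ h1
    have h4 := hnmem (dgn u) h2 h3
    exact ⟨h2, h3, hth u hu _ h4.1 (h4.2.symm)⟩
  have hDicc : D = Finset.Icc d0 d1 := by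
    ext d
    simp only [Finset.mem_Icc]
    constructor
    · intro hd; exact ⟨D.min'_le _ hd, D.le_max' _ hd⟩
    · intro ⟨h1, h2⟩
      obtain ⟨w, hw, hwd⟩ := hint d h1 h2
      exact hwd ▸ Finset.mem_image_of_mem _ hw
  have hcard : ν.card = (d1 + 1 - d0).toNat := by
    have hinj : Set.InjOn dgn ν := fun x hx y hy hxy => hth x hx y hy hxy
    have := Finset.card_image_of_injOn hinj
    rw [← hD] at this
    rw [← this, hDicc, Int.card_Icc]
  refine ⟨d0, d1, n, ?_, hnmem, hbounds, hcard, ?_⟩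
  · have := D.min'_le _ (D.max'_mem hDne); exact this
  · intro d h1 h2
    have ha := hnmem d h1 (by omega)
    have hb := hnmem (d + 1) (by omega) (by omega)
    exact step_lemma hsk hth ha.1 hb.1 (by omega)

lemma mono_aux {n : ℤ → Node} {d0 d1 : ℤ}
    (hstep : ∀ d, d0 ≤ d → d < d1 →
      n (d + 1) = ((n d).1, (n d).2 + 1) ∨ n (d + 1) = ((n d).1 - 1, (n d).2)) :
    ∀ (k : ℕ) (d : ℤ), d0 ≤ d → d + k ≤ d1 →
      (n (d + k)).1 ≤ (n d).1 ∧ (n d).2 ≤ (n (d + k)).2 := by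
  intro k
  induction k with
  | zero => simp
  | succ k ih =>
      intro d hd hdk
      have hk : ((k : ℤ) + 1 : ℤ) = ((k + 1 : ℕ) : ℤ) := by push_cast; ring
      have h1 := ih d hd (by omega)
      have h2 := hstep (d + k) (by omega) (by omega)
      have he : d + ((k + 1 : ℕ) : ℤ) = (d + k) + 1 := by push_cast; ring
      rw [he]
      rcases h2 with h | h <;> rw [h] <;> simp <;> omega

lemma mono {n : ℤ → Node} {d0 d1 : ℤ}
    (hstep : ∀ d, d0 ≤ d → d < d1 →
      n (d + 1) = ((n d).1, (n d).2 + 1) ∨ n (d + 1) = ((n d).1 - 1, (n d).2))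
    {d d' : ℤ} (h1 : d0 ≤ d) (h2 : d ≤ d') (h3 : d' ≤ d1) :
    (n d').1 ≤ (n d).1 ∧ (n d).2 ≤ (n d').2 := by
  have := mono_aux hstep (d' - d).toNat d h1 (by omega)
  rwa [show d + ((d' - d).toNat : ℤ) = d' by omega] at this

lemma allV {n : ℤ → Node} {d0 d1 : ℤ}
    (hstep : ∀ d, d0 ≤ d → d < d1 →
      n (d + 1) = ((n d).1, (n d).2 + 1) ∨ n (d + 1) = ((n d).1 - 1, (n d).2))
    {d d' x : ℤ} (h1 : d0 ≤ d) (h2 : d ≤ x) (h3 : x < d') (h4 : d' ≤ d1)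
    (hcol : (n d).2 = (n d').2) :
    n (x + 1) = ((n x).1 - 1, (n x).2) := by
  rcases hstep x (by omega) (by omega) with h | h
  · exfalso
    have m1 := mono hstep h1 h2 (by omega)
    have m2 := mono hstep (d := x + 1) (d' := d') (by omega) (by omega) h4
    rw [h] at m2
    simp at m2
    omega
  · exact h

lemma allH {n : ℤ → Node} {d0 d1 : ℤ}
    (hstep : ∀ d, d0 ≤ d → d < d1 →
      n (d + 1) = ((n d).1, (n d).2 + 1) ∨ n (d + 1) = ((n d).1 - 1, (n d).2))
    {d d' x : ℤ} (h1 : d0 ≤ d) (h2 : d ≤ x) (h3 : x < d') (h4 : d' ≤ d1)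
    (hrow : (n d).1 = (n d').1) :
    n (x + 1) = ((n x).1, (n x).2 + 1) := by
  rcases hstep x (by omega) (by omega) with h | h
  · exact h
  · exfalso
    have m1 := mono hstep h1 h2 (by omega)
    have m2 := mono hstep (d := x + 1) (d' := d') (by omega) (by omega) h4
    rw [h] at m2
    simp at m2
    omega

lemma step_adj {u : Node} {v : Node}
    (h : v = ((u : Node).1, u.2 + 1) ∨ v = (u.1 - 1, u.2)) : Adj u v := by
  rcases h with h | h <;> subst h <;> simp [Adj, Prod.ext_iff] <;> omega

lemma path_window {ξ : Finset Node} {n : ℤ → Node} {d0 d1 a b : ℤ}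
    (hstep : ∀ d, d0 ≤ d → d < d1 →
      n (d + 1) = ((n d).1, (n d).2 + 1) ∨ n (d + 1) = ((n d).1 - 1, (n d).2))
    (hmem : ∀ x, a ≤ x → x ≤ b → n x ∈ ξ) (ha : d0 ≤ a) (hb : b ≤ d1) :
    ∀ (k : ℕ) (d : ℤ), a ≤ d → d + k ≤ b → PathIn ξ (n d) (n (d + k)) := by
  intro k
  induction k with
  | zero => intro d _ _; simp only [Nat.cast_zero, add_zero]; exact Relation.ReflTransGen.refl
  | succ k ih =>
      intro d h1 h2
      have he : d + ((k + 1 : ℕ) : ℤ) = (d + k) + 1 := by push_cast; ring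
      rw [he]
      refine Relation.ReflTransGen.tail (ih d h1 (by omega)) ?_
      refine ⟨hmem _ (by omega) (by omega), hmem _ (by omega) (by omega), ?_⟩
      exact step_adj (hstep (d + k) (by omega) (by omega))

lemma int_cast_inj_window {e : ℕ} (he : 0 < e) {a x d : ℤ}
    (hx1 : a ≤ x) (hx2 : x < a + e) (hd1 : a ≤ d) (hd2 : d < a + e)
    (h : ((x : ZMod e)) = ((d : ZMod e))) : x = d := by
  have hdvd : (e : ℤ) ∣ x - d := by
    have := (ZMod.intCast_eq_intCast_iff' x d e).mp h
    exact Int.ModEq.dvd this.symm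
  obtain ⟨c, hc⟩ := hdvd
  have h1 : c < 1 := by
    by_contra hcon
    push_neg at hcon
    have : (e : ℤ) * 1 ≤ (e : ℤ) * c := by
      apply mul_le_mul_of_nonneg_left hcon (by positivity)
    omega
  have h2 : -1 < c := by
    by_contra hcon
    push_neg at hcon
    have : (e : ℤ) * c ≤ (e : ℤ) * (-1) := by
      apply mul_le_mul_of_nonneg_left hcon (by positivity)
    omega
  have : c = 0 := by omega
  subst this
  omega

end Stmt14Aux


open Stmt14Aux
theorem stmt14 (e : ℕ) (he : 1 < e) (ν : Finset Node) (hν : IsRibbon ν)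
    (m : ℕ) (hm : 1 ≤ m) (hc : cont e ν = fun _ => (m : ℤ)) :
    ∃ ξ : Finset Node, IsRibbon ξ ∧ SERemovable ν ξ ∧ cont e ξ = deltaR e := by
  classical
  haveI : NeZero e := ⟨by omega⟩
  obtain ⟨hne, hsk, hcn, hth⟩ := hν
  have hcard : ν.card = e * m := by
    have h1 : ν.card = ∑ i : ZMod e, (ν.filter (fun u => res e u = i)).card :=
      Finset.card_eq_sum_card_fiberwise (fun x _ => Finset.mem_univ _)
    have h2 : ∀ i : ZMod e, (ν.filter (fun u => res e u = i)).card = m := by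
      intro i
      have h := congrFun hc i
      simp only [cont] at h
      exact_mod_cast h
    rw [h1]
    simp only [h2, Finset.sum_const, Finset.card_univ, ZMod.card, smul_eq_mul]
  obtain ⟨d0, d1, n, hd01, hnmem, hbnd, hcard2, hstep⟩ := exists_enum hne hsk hcn hth
  have hlen : d1 + 1 = d0 + e * m := by
    rw [hcard] at hcard2; omega
  set Vat : ℤ → Prop := fun d => n (d + 1) = ((n d).1 - 1, (n d).2) with hVat
  obtain ⟨a, ha0, ha1, hEnter, hLeave⟩ :
      ∃ a : ℤ, d0 ≤ a ∧ a + e ≤ d1 + 1 ∧ (a = d0 ∨ ¬ Vat (a - 1)) ∧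
        (a + e = d1 + 1 ∨ Vat (a + e - 1)) := by
    have h4 : ((m * e : ℕ) : ℤ) = (e : ℤ) * m := by push_cast; ring
    have key : ∀ j : ℕ, j + 1 ≤ m →
        d0 ≤ d0 + ((j * e : ℕ) : ℤ) ∧ (d0 + ((j * e : ℕ) : ℤ)) + e ≤ d1 + 1 := by
      intro j hj
      refine ⟨by omega, ?_⟩
      have h1 : (j + 1) * e ≤ m * e := Nat.mul_le_mul_right e hj
      have h2 : ((j * e : ℕ) : ℤ) + e = (((j + 1) * e : ℕ) : ℤ) := by push_cast; ring
      have h3 : (((j + 1) * e : ℕ) : ℤ) ≤ ((m * e : ℕ) : ℤ) := by exact_mod_cast h1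
      omega
    by_cases hex : ∃ k : ℕ, 1 ≤ k ∧ k < m ∧ Vat (d0 + ((k * e : ℕ) : ℤ) - 1)
    · obtain ⟨hk1, hk2, hk3⟩ := Nat.find_spec hex
      set k := Nat.find hex with hkdef
      have hcast : (((k - 1) * e : ℕ) : ℤ) + e = ((k * e : ℕ) : ℤ) := by
        push_cast [Nat.cast_sub hk1]; ring
      refine ⟨d0 + (((k - 1) * e : ℕ) : ℤ), (key (k - 1) (by omega)).1,
        (key (k - 1) (by omega)).2, ?_, ?_⟩
      · rcases Nat.eq_or_lt_of_le hk1 with h | h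
        · left
          have h0 : k - 1 = 0 := by omega
          rw [h0]; simp
        · right
          intro hV
          exact Nat.find_min hex (m := k - 1) (by omega) ⟨by omega, by omega, hV⟩
      · right
        have harg : d0 + (((k - 1) * e : ℕ) : ℤ) + e - 1 = d0 + ((k * e : ℕ) : ℤ) - 1 := by
          omega
        rw [harg]; exact hk3
    · push_neg at hex
      have hcast : (((m - 1) * e : ℕ) : ℤ) + e = ((m * e : ℕ) : ℤ) := by
        push_cast [Nat.cast_sub hm]; ring
      refine ⟨d0 + (((m - 1) * e : ℕ) : ℤ), (key (m - 1) (by omega)).1,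
        (key (m - 1) (by omega)).2, ?_, ?_⟩
      · rcases Nat.eq_or_lt_of_le hm with h | h
        · left
          have h0 : m - 1 = 0 := by omega
          rw [h0]; simp
        · right
          exact hex (m - 1) (by omega) (by omega)
      · left; omega
  have hHV : ∀ x : ℤ, n (x + 1) = ((n x).1, (n x).2 + 1) → Vat x → False := by
    intro x h1 h2
    rw [hVat] at h2
    rw [h1, Prod.mk.injEq] at h2
    omega
  set ξ : Finset Node := ν.filter (fun u => a ≤ dgn u ∧ dgn u < a + e) with hξdef
  have hmemξ : ∀ x, a ≤ x → x < a + e → n x ∈ ξ := by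
    intro x h1 h2
    have h := hnmem x (by omega) (by omega)
    exact Finset.mem_filter.mpr ⟨h.1, by rw [h.2]; exact ⟨h1, h2⟩⟩
  have hξ_elim : ∀ u ∈ ξ, u ∈ ν ∧ a ≤ dgn u ∧ dgn u < a + e := by
    intro u hu
    have h := Finset.mem_filter.mp hu
    exact ⟨h.1, h.2⟩
  have hlowV : ∀ u ∈ ξ, ∀ v ∈ ν, SE u v → dgn v < a → Vat (a - 1) := by
    intro u hu v hv hSE hlt
    obtain ⟨huν, hua, hue⟩ := hξ_elim u hu
    obtain ⟨hv0, hv1, hveq⟩ := hbnd v hv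
    obtain ⟨hu0, hu1, hueq⟩ := hbnd u huν
    have hmono := mono hstep (d := dgn v) (d' := dgn u) hv0 (by omega) hu1
    rw [hueq, hveq] at hSE
    exact allV hstep (d := dgn v) (d' := dgn u) hv0 (by omega) (by omega) hu1
      (le_antisymm hmono.2 hSE.2)
  have hlowH : ∀ w ∈ ξ, ∀ v ∈ ν, SE v w → dgn v < a →
      n (a - 1 + 1) = ((n (a - 1)).1, (n (a - 1)).2 + 1) := by
    intro w hw v hv hSE hlt
    obtain ⟨hwν, hwa, hwe⟩ := hξ_elim w hw
    obtain ⟨hv0, hv1, hveq⟩ := hbnd v hv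
    obtain ⟨hw0, hw1, hweq⟩ := hbnd w hwν
    have hmono := mono hstep (d := dgn v) (d' := dgn w) hv0 (by omega) hw1
    rw [hweq, hveq] at hSE
    exact allH hstep (d := dgn v) (d' := dgn w) hv0 (by omega) (by omega) hw1
      (le_antisymm hSE.1 hmono.1)
  have hhighH : ∀ u ∈ ξ, ∀ v ∈ ν, SE u v → a + e ≤ dgn v →
      n (a + e - 1 + 1) = ((n (a + e - 1)).1, (n (a + e - 1)).2 + 1) := by
    intro u hu v hv hSE hge
    obtain ⟨huν, hua, hue⟩ := hξ_elim u hu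
    obtain ⟨hv0, hv1, hveq⟩ := hbnd v hv
    obtain ⟨hu0, hu1, hueq⟩ := hbnd u huν
    have hmono := mono hstep (d := dgn u) (d' := dgn v) hu0 (by omega) hv1
    rw [hueq, hveq] at hSE
    exact allH hstep (d := dgn u) (d' := dgn v) hu0 (by omega) (by omega) hv1
      (le_antisymm hSE.1 hmono.1)
  have hhighV : ∀ w ∈ ξ, ∀ v ∈ ν, SE v w → a + e ≤ dgn v → Vat (a + e - 1) := by
    intro w hw v hv hSE hge
    obtain ⟨hwν, hwa, hwe⟩ := hξ_elim w hw
    obtain ⟨hv0, hv1, hveq⟩ := hbnd v hv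
    obtain ⟨hw0, hw1, hweq⟩ := hbnd w hwν
    have hmono := mono hstep (d := dgn w) (d' := dgn v) hw0 (by omega) hv1
    rw [hweq, hveq] at hSE
    exact allV hstep (d := dgn w) (d' := dgn v) hw0 (by omega) (by omega) hv1
      (le_antisymm hmono.2 hSE.2)
  refine ⟨ξ, ⟨⟨n a, hmemξ a le_rfl (by omega)⟩, ?_, ?_, ?_⟩, ⟨Finset.filter_subset _ _, ?_⟩, ?_⟩
  · -- IsSkew ξ
    intro u hu w hw v huv hvw
    have huν := (hξ_elim u hu).1
    have hwν := (hξ_elim w hw).1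
    have hvν : v ∈ ν := hsk u huν w hwν v huv hvw
    rcases lt_or_ge (dgn v) a with hlt | hge1
    · exact absurd (hlowV u hu v hvν huv hlt) (fun hV => hHV _ (hlowH w hw v hvν hvw hlt) hV)
    rcases lt_or_ge (dgn v) (a + e) with hlt2 | hge2
    · exact Finset.mem_filter.mpr ⟨hvν, hge1, hlt2⟩
    · exact absurd (hhighV w hw v hvν hvw hge2) (fun hV => hHV _ (hhighH u hu v hvν huv hge2) hV)
  · -- IsConnectedShape ξ
    intro u hu v hv
    obtain ⟨huν, hua, hue⟩ := hξ_elim u hu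
    obtain ⟨hvν, hva, hve⟩ := hξ_elim v hv
    have hueq := (hbnd u huν).2.2
    have hveq := (hbnd v hvν).2.2
    have hwin : ∀ x y : ℤ, a ≤ x → x ≤ y → y < a + e → PathIn ξ (n x) (n y) := by
      intro x y h1 h2 h3
      have := path_window hstep (a := a) (b := a + e - 1)
        (fun z hz1 hz2 => hmemξ z hz1 (by omega)) ha0 (by omega)
        (y - x).toNat x h1 (by omega)
      rwa [show x + ((y - x).toNat : ℤ) = y by omega] at this
    rcases le_total (dgn u) (dgn v) with h | h
    · rw [hueq, hveq]; exact hwin _ _ hua h hve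
    · rw [hueq, hveq]; exact pathin_symm (hwin _ _ hva h hue)
  · -- Thin ξ
    intro u hu v hv h
    exact hth u (hξ_elim u hu).1 v (hξ_elim v hv).1 h
  · -- SERemovable second part
    intro u hu v hv hSE
    obtain ⟨hvν, hvnot⟩ := Finset.mem_sdiff.mp hv
    have hvb := hbnd v hvν
    rcases lt_or_ge (dgn v) a with hlt | hge1
    · have hV := hlowV u hu v hvν hSE hlt
      rcases hEnter with h | h
      · omega
      · exact h hV
    rcases lt_or_ge (dgn v) (a + e) with hlt2 | hge2
    · exact hvnot (Finset.mem_filter.mpr ⟨hvν, hge1, hlt2⟩)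
    · have hH := hhighH u hu v hvν hSE hge2
      rcases hLeave with h | h
      · omega
      · exact hHV _ hH h
  · -- cont e ξ = deltaR e
    funext i
    set r : ZMod e := i - ((a : ℤ) : ZMod e) with hr
    set d : ℤ := a + (r.val : ℤ) with hd
    have hd1 : a ≤ d := by
      have hnn : (0 : ℤ) ≤ (r.val : ℤ) := Int.natCast_nonneg _
      omega
    have hd2 : d < a + e := by
      have := ZMod.val_lt r
      simp only [hd]
      omega
    have hdi : ((d : ℤ) : ZMod e) = i := by
      have hval : ((r.val : ℕ) : ZMod e) = r := by
        rw [ZMod.natCast_val, ZMod.cast_id]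
      simp only [hd]
      push_cast
      rw [hval, hr]
      ring
    have hfilter : ξ.filter (fun u => res e u = i) = {n d} := by
      ext u
      simp only [Finset.mem_filter, Finset.mem_singleton]
      constructor
      · rintro ⟨hu, hres⟩
        obtain ⟨huν, hua, hue⟩ := hξ_elim u hu
        have hueq := (hbnd u huν).2.2
        have hres' : ((dgn u : ℤ) : ZMod e) = ((d : ℤ) : ZMod e) := by
          rw [hdi, ← hres]
          simp [res, dgn]
        have : dgn u = d := int_cast_inj_window (by omega) hua hue hd1 hd2 hres'
        rw [hueq, this]
      · intro h
        subst h
        refine ⟨hmemξ d hd1 hd2, ?_⟩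
        have hnd := hnmem d (by omega) (by omega)
        have : res e (n d) = ((dgn (n d) : ℤ) : ZMod e) := by simp [res, dgn]
        rw [this, hnd.2, hdi]
    have : cont e ξ i = 1 := by
      simp [cont, hfilter]
    rw [this]; rfl
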